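/- arXiv:2309.14584 — 3 statements merged into one kernel-verified Lean document; each statement's English description precedes it below -/
import Mathlib

section
/- Let N be a positive integer and let m, n be integers. Then (1/N) · ∑_{k=0}^{N−1} cos(n(k+1/2)π/N) · cos(m(k+1/2)π/N) = (1/2)·Δ_N(m+n) + (1/2)·Δ_N(m−n). -/
open Real Finset

/-- The aliasing function `Δ_N : ℤ → ℝ`: `Δ_N ℓ = 1` if `ℓ ≡ 0 (mod 4N)`,
`Δ_N ℓ = -1` if `ℓ ≡ 2N (mod 4N)`, and `0` otherwise. -/
noncomputable def aliasDelta (N : ℕ) (ℓ : ℤ) : ℝ :=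
  if ℓ % (4 * N) = 0 then 1 else if ℓ % (4 * N) = 2 * N then -1 else 0

lemma aliasDelta_of_not_dvd (N : ℕ) (hN : 0 < N) (ℓ : ℤ) (h : ¬ (2 * (N:ℤ)) ∣ ℓ) :
    aliasDelta N ℓ = 0 := by
  unfold aliasDelta
  rw [if_neg, if_neg]
  · intro hmod
    apply h
    have : ℓ = 4 * N * (ℓ / (4 * N)) + ℓ % (4 * N) := (Int.mul_ediv_add_emod ℓ (4*N)).symm
    rw [hmod] at this
    exact ⟨2 * (ℓ / (4*N)) + 1, by linarith⟩
  · intro hmod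
    have h4 : (4 * (N:ℤ)) ∣ ℓ := Int.dvd_of_emod_eq_zero hmod
    exact h (dvd_trans ⟨2, by ring⟩ h4)

lemma aliasDelta_even (N : ℕ) (hN : 0 < N) (t : ℤ) :
    aliasDelta N (2 * N * (2 * t)) = 1 := by
  unfold aliasDelta
  rw [if_pos]
  have : 2 * (N:ℤ) * (2 * t) = 4 * N * t := by ring
  rw [this]
  exact Int.mul_emod_right _ _

lemma aliasDelta_odd (N : ℕ) (hN : 0 < N) (t : ℤ) :
    aliasDelta N (2 * N * (2 * t + 1)) = -1 := by
  unfold aliasDelta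
  have hNZ : (0:ℤ) < N := by exact_mod_cast hN
  have hmod : (2 * (N:ℤ) * (2 * t + 1)) % (4 * N) = 2 * N := by
    have : 2 * (N:ℤ) * (2 * t + 1) = 2 * N + 4 * N * t := by ring
    rw [this, Int.add_mul_emod_self_left]
    exact Int.emod_eq_of_lt (by linarith) (by linarith)
  rw [if_neg, if_pos hmod]
  rw [hmod]
  intro h; linarith

lemma sumCos (N : ℕ) (hN : 0 < N) (ℓ : ℤ) :
    ∑ k ∈ Finset.range N, Real.cos ((ℓ:ℝ) * ((k:ℝ) + 1/2) * π / N)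
      = N * aliasDelta N ℓ := by
  have hNR : (N:ℝ) ≠ 0 := Nat.cast_ne_zero.mpr hN.ne'
  have hNC : (N:ℂ) ≠ 0 := Nat.cast_ne_zero.mpr hN.ne'
  have hNC2 : (((N:ℝ)):ℂ) ≠ 0 := by exact_mod_cast hNR
  set c : ℂ := (ℓ : ℂ) * (π:ℝ) * Complex.I / (2 * N) with hc
  have hterm : ∀ k : ℕ, Real.cos ((ℓ:ℝ) * ((k:ℝ) + 1/2) * π / N)
      = (Complex.exp c * (Complex.exp (2*c))^k).re := by
    intro k
    rw [← Complex.exp_ofReal_mul_I_re]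
    congr 1
    rw [← Complex.exp_nat_mul, ← Complex.exp_add]
    congr 1
    rw [hc]
    push_cast
    field_simp
    ring
  have hsum : ∑ k ∈ Finset.range N, Real.cos ((ℓ:ℝ) * ((k:ℝ) + 1/2) * π / N)
      = (Complex.exp c * ∑ k ∈ Finset.range N, (Complex.exp (2*c))^k).re := by
    rw [Finset.mul_sum, Complex.re_sum]
    exact Finset.sum_congr rfl fun k _ => hterm k
  rw [hsum]
  by_cases hdvd : (2 * (N:ℤ)) ∣ ℓ
  · obtain ⟨j, hj⟩ := hdvd
    have hcj : c = (j : ℂ) * ((π:ℝ) * Complex.I) := by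
      rw [hc, hj]
      push_cast
      field_simp [hNC, hNC2]
    rcases Int.even_or_odd j with ⟨t, ht⟩ | ⟨t, ht⟩
    · have hexpc : Complex.exp c = 1 := by
        rw [hcj, ht]
        have : ((t + t : ℤ) : ℂ) * ((π:ℝ) * Complex.I) = (t:ℂ) * (2 * (π:ℝ) * Complex.I) := by
          push_cast; ring
        rw [this]
        exact Complex.exp_int_mul_two_pi_mul_I t
      have hexp2c : Complex.exp (2 * c) = 1 := by
        have : (2:ℂ) * c = c + c := by ring
        rw [this, Complex.exp_add, hexpc, one_mul]
      rw [hexpc, hexp2c]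
      simp only [one_pow, Finset.sum_const, Finset.card_range, nsmul_eq_mul, mul_one, one_mul]
      have : ℓ = 2 * N * (2 * t) := by rw [hj, ht]; ring
      rw [this, aliasDelta_even N hN t]
      norm_num
    · have hexpc : Complex.exp c = -1 := by
        rw [hcj, ht]
        have : ((2 * t + 1 : ℤ) : ℂ) * ((π:ℝ) * Complex.I)
            = (t:ℂ) * (2 * (π:ℝ) * Complex.I) + (π:ℝ) * Complex.I := by
          push_cast; ring
        rw [this, Complex.exp_add, Complex.exp_int_mul_two_pi_mul_I, one_mul]
        exact_mod_cast Complex.exp_pi_mul_I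
      have hexp2c : Complex.exp (2 * c) = 1 := by
        have : (2:ℂ) * c = c + c := by ring
        rw [this, Complex.exp_add, hexpc]
        ring
      rw [hexpc, hexp2c]
      simp only [one_pow, Finset.sum_const, Finset.card_range, nsmul_eq_mul, mul_one]
      have : ℓ = 2 * N * (2 * t + 1) := by rw [hj, ht]
      rw [this, aliasDelta_odd N hN t]
      norm_num
  · -- not divisible: aliasDelta = 0
    rw [aliasDelta_of_not_dvd N hN ℓ hdvd, mul_zero]
    have hz1 : Complex.exp (2 * c) ≠ 1 := by
      intro h
      rw [Complex.exp_eq_one_iff] at h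
      obtain ⟨q, hq⟩ := h
      apply hdvd
      refine ⟨q, ?_⟩
      have hpi : ((π:ℝ):ℂ) ≠ 0 := by exact_mod_cast Real.pi_ne_zero
      have : (ℓ:ℂ) = 2 * N * q := by
        rw [hc] at hq
        field_simp at hq
        have h2 : (2 * ((π:ℝ):ℂ) * Complex.I) ≠ 0 :=
          mul_ne_zero (mul_ne_zero two_ne_zero hpi) Complex.I_ne_zero
        apply mul_left_cancel₀ h2
        linear_combination (2 * ((π:ℝ):ℂ) * Complex.I) * hq
      exact_mod_cast this
    rw [geom_sum_eq hz1]
    have hpow : Complex.exp (2 * c) ^ N = Complex.exp ((ℓ:ℂ) * (π:ℝ) * Complex.I) := by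
      rw [← Complex.exp_nat_mul]
      congr 1
      rw [hc]
      field_simp [hNC, hNC2]
    rcases Int.even_or_odd ℓ with ⟨t, ht⟩ | ⟨t, ht⟩
    · have : Complex.exp (2 * c) ^ N = 1 := by
        rw [hpow, ht]
        have : ((t + t : ℤ) : ℂ) * (π:ℝ) * Complex.I = (t:ℂ) * (2 * (π:ℝ) * Complex.I) := by
          push_cast; ring
        rw [this]
        exact Complex.exp_int_mul_two_pi_mul_I t
      rw [this]
      simp
    · have hpowval : Complex.exp (2 * c) ^ N = -1 := by
        rw [hpow, ht]
        have : ((2 * t + 1 : ℤ) : ℂ) * (π:ℝ) * Complex.I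
            = (t:ℂ) * (2 * (π:ℝ) * Complex.I) + (π:ℝ) * Complex.I := by
          push_cast; ring
        rw [this, Complex.exp_add, Complex.exp_int_mul_two_pi_mul_I, one_mul]
        exact_mod_cast Complex.exp_pi_mul_I
      rw [hpowval]
      set u : ℂ := Complex.exp c with hu
      have h2c : Complex.exp (2 * c) = u ^ 2 := by
        rw [hu, ← Complex.exp_nat_mul]
        norm_num
      have hu0 : u ≠ 0 := Complex.exp_ne_zero c
      have hu2 : u ^ 2 ≠ 1 := by rw [← h2c]; exact hz1
      have hconjc : (starRingEnd ℂ) c = -c := by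
        rw [hc]
        simp [map_div₀, Complex.conj_I, map_ofNat, Complex.conj_ofReal]
        ring
      have hconju : (starRingEnd ℂ) u = u⁻¹ := by
        rw [hu, ← Complex.exp_conj, hconjc, Complex.exp_neg]
      set v : ℂ := u * ((-1 - 1) / (Complex.exp (2*c) - 1)) with hv
      have hconjv : (starRingEnd ℂ) v = -v := by
        rw [hv, h2c]
        rw [map_mul, map_div₀, map_sub, map_sub, map_pow, hconju, map_one]
        have hden2 : u⁻¹ ^ 2 - 1 ≠ 0 := by
          intro h
          apply hu2
          have h' : (u ^ 2)⁻¹ = 1 := by rw [← inv_pow]; exact sub_eq_zero.mp h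
          calc u ^ 2 = ((u ^ 2)⁻¹)⁻¹ := (inv_inv _).symm
            _ = 1 := by rw [h']; exact inv_one
        have hden : u ^ 2 - 1 ≠ 0 := sub_ne_zero.mpr hu2
        rw [← mul_div_assoc, ← mul_div_assoc, ← neg_div, div_eq_div_iff hden2 hden]
        field_simp
        simp only [map_neg, map_one]
        ring
      have hre : v.re = 0 := by
        have h1 := Complex.add_conj v
        rw [hconjv] at h1
        simp at h1
        exact_mod_cast h1
      exact hre

theorem stmt0 (N : ℕ) (hN : 0 < N) (m n : ℤ) :
    (1 / (N : ℝ)) *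
      ∑ k ∈ Finset.range N,
        Real.cos ((n : ℝ) * ((k : ℝ) + 1 / 2) * Real.pi / N) *
          Real.cos ((m : ℝ) * ((k : ℝ) + 1 / 2) * Real.pi / N) =
    (1 / 2) * aliasDelta N (m + n) + (1 / 2) * aliasDelta N (m - n) := by
  have hNR : (N:ℝ) ≠ 0 := Nat.cast_ne_zero.mpr hN.ne'
  have hsplit : ∀ k : ℕ,
      Real.cos ((n : ℝ) * ((k : ℝ) + 1 / 2) * Real.pi / N) *
        Real.cos ((m : ℝ) * ((k : ℝ) + 1 / 2) * Real.pi / N)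
      = (Real.cos (((m + n : ℤ) : ℝ) * ((k : ℝ) + 1 / 2) * π / N)
        + Real.cos (((m - n : ℤ) : ℝ) * ((k : ℝ) + 1 / 2) * π / N)) / 2 := by
    intro k
    set a := (n : ℝ) * ((k : ℝ) + 1 / 2) * Real.pi / N with ha
    set b := (m : ℝ) * ((k : ℝ) + 1 / 2) * Real.pi / N with hb
    have h1 : Real.cos (a + b) = Real.cos a * Real.cos b - Real.sin a * Real.sin b :=
      Real.cos_add a b
    have h2 : Real.cos (b - a) = Real.cos b * Real.cos a + Real.sin b * Real.sin a :=
      Real.cos_sub b a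
    have e1 : ((m + n : ℤ) : ℝ) * ((k : ℝ) + 1 / 2) * π / N = a + b := by
      rw [ha, hb]; push_cast; ring
    have e2 : ((m - n : ℤ) : ℝ) * ((k : ℝ) + 1 / 2) * π / N = b - a := by
      rw [ha, hb]; push_cast; ring
    rw [e1, e2, h1, h2]
    ring
  rw [Finset.sum_congr rfl fun k _ => hsplit k]
  rw [← Finset.sum_div, Finset.sum_add_distrib, sumCos N hN (m+n), sumCos N hN (m-n)]
  field_simp
end

section
/- Let D be a positive integer, let N_1, …, N_D be positive integers, let θ^{(i)}_{k} = (k+1/2)π/N_i, and let m = (m_1, …, m_D) and n = (n_1, …, n_D) be multi-indices of natural numbers. Then (∏_{i=1}^{D} 1/N_i) · ∑_{k_1=0}^{N_1−1} ⋯ ∑_{k_D=0}^{N_D−1} ∏_{i=1}^{D} cos(n_i θ^{(i)}_{k_i}) cos(m_i θ^{(i)}_{k_i}) = ∏_{i=1}^{D} ( (1/2)·Δ_{N_i}(m_i+n_i) + (1/2)·Δ_{N_i}(m_i−n_i) ). -/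
open Real Finset

lemma sumcos (x : ℝ) (N : ℕ) :
    2 * Real.sin x * ∑ k ∈ range N, Real.cos ((2 * k + 1) * x) = Real.sin (2 * N * x) := by
  rw [Finset.mul_sum]
  have : ∀ k : ℕ, 2 * Real.sin x * Real.cos ((2 * k + 1) * x)
      = Real.sin (2 * (k + 1) * x) - Real.sin (2 * k * x) := by
    intro k
    have h1 : (2 * (k:ℝ) + 1) * x + x = 2 * (k + 1) * x := by ring
    have h2 : (2 * (k:ℝ) + 1) * x - x = 2 * k * x := by ring
    rw [← h1, ← h2, Real.sin_add, Real.sin_sub]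
    ring
  simp_rw [this]
  have := Finset.sum_range_sub (fun k : ℕ => Real.sin (2 * k * x)) N
  push_cast at this ⊢
  rw [this]
  simp

lemma delta1 (N : ℕ) (hN : 0 < N) (ℓ : ℤ) :
    ∑ k ∈ range N, Real.cos ((ℓ : ℝ) * (((k : ℝ) + 1 / 2) * Real.pi / N))
      = (N : ℝ) * aliasDelta N ℓ := by
  have hNR : (N : ℝ) ≠ 0 := Nat.cast_ne_zero.mpr hN.ne'
  by_cases hdvd : (2 * (N : ℤ)) ∣ ℓ
  · obtain ⟨t, ht⟩ := hdvd
    rcases Int.even_or_odd t with ⟨s, hs⟩ | ⟨s, hs⟩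
    · -- ℓ = 4 N s, each term = 1
      have hl : ℓ = 4 * N * s := by rw [ht, hs]; ring
      have hterm : ∀ k ∈ range N,
          Real.cos ((ℓ : ℝ) * (((k : ℝ) + 1 / 2) * Real.pi / N)) = 1 := by
        intro k _
        have harg : (ℓ : ℝ) * (((k : ℝ) + 1 / 2) * Real.pi / N)
            = ((s * (2 * k + 1) : ℤ) : ℝ) * (2 * Real.pi) := by
          rw [hl]; push_cast; field_simp; ring
        rw [harg, Real.cos_int_mul_two_pi]
      rw [Finset.sum_congr rfl hterm, Finset.sum_const, card_range, nsmul_eq_mul, mul_one]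
      have hmod : ℓ % (4 * N) = 0 := by
        rw [hl]; exact Int.mul_emod_right _ _
      unfold aliasDelta
      rw [if_pos hmod, mul_one]
    · -- ℓ = 4 N s + 2 N, each term = -1
      have hl : ℓ = 2 * N + 4 * N * s := by rw [ht, hs]; ring
      have hterm : ∀ k ∈ range N,
          Real.cos ((ℓ : ℝ) * (((k : ℝ) + 1 / 2) * Real.pi / N)) = -1 := by
        intro k _
        have harg : (ℓ : ℝ) * (((k : ℝ) + 1 / 2) * Real.pi / N)
            = ((2 * s * k + s + k : ℤ) : ℝ) * (2 * Real.pi) + Real.pi := by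
          rw [hl]; push_cast; field_simp; ring
        rw [harg, Real.cos_int_mul_two_pi_add_pi]
      rw [Finset.sum_congr rfl hterm, Finset.sum_const, card_range, nsmul_eq_mul]
      have hmod : ℓ % (4 * N) = 2 * N := by
        rw [hl, Int.add_mul_emod_self_left]
        exact Int.emod_eq_of_lt (by positivity) (by omega)
      have hne : ℓ % (4 * N) ≠ 0 := by rw [hmod]; omega
      unfold aliasDelta
      rw [if_neg hne, if_pos hmod]
  · set x : ℝ := (ℓ : ℝ) * Real.pi / (2 * N) with hx
    have hform : ∀ k ∈ range N,
        Real.cos ((ℓ : ℝ) * (((k : ℝ) + 1 / 2) * Real.pi / N))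
          = Real.cos ((2 * k + 1) * x) := by
      intro k _
      congr 1
      rw [hx]; field_simp
    rw [Finset.sum_congr rfl hform]
    have hsx : Real.sin x ≠ 0 := by
      intro h
      obtain ⟨j, hj⟩ := Real.sin_eq_zero_iff.mp h
      rw [hx] at hj
      apply hdvd
      refine ⟨j, ?_⟩
      have hpi : Real.pi ≠ 0 := Real.pi_ne_zero
      have h2 : ((2 * (N:ℤ) * j : ℤ) : ℝ) * Real.pi = (ℓ : ℝ) * Real.pi := by
        push_cast
        field_simp at hj
        rw [← hj]; ring
      have h3 : ((2 * (N:ℤ) * j : ℤ) : ℝ) = (ℓ : ℝ) := mul_right_cancel₀ hpi h2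
      exact_mod_cast h3.symm
    have hsum := sumcos x N
    have h2Nx : Real.sin (2 * N * x) = 0 := by
      have harg : 2 * (N : ℝ) * x = (ℓ : ℝ) * Real.pi := by rw [hx]; field_simp
      rw [harg]
      exact Real.sin_int_mul_pi ℓ
    rw [h2Nx] at hsum
    have h2 : (2 : ℝ) * Real.sin x ≠ 0 := mul_ne_zero two_ne_zero hsx
    have hzero : ∑ k ∈ range N, Real.cos ((2 * (k:ℝ) + 1) * x) = 0 :=
      (mul_eq_zero.mp hsum).resolve_left h2
    rw [hzero]
    have hmm : ℓ % (2 * N) = ℓ % (4 * N) % (2 * N) :=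
      (Int.emod_emod_of_dvd ℓ ⟨2, by ring⟩).symm
    have hd : aliasDelta N ℓ = 0 := by
      unfold aliasDelta
      have h1 : ℓ % (4 * N) ≠ 0 := by
        intro h
        exact hdvd (Int.dvd_of_emod_eq_zero (by rw [hmm, h]; simp))
      have h2 : ℓ % (4 * N) ≠ 2 * N := by
        intro h
        exact hdvd (Int.dvd_of_emod_eq_zero (by rw [hmm, h]; simp))
      rw [if_neg h1, if_neg h2]
    rw [hd, mul_zero]

lemma dim1 (N : ℕ) (hN : 0 < N) (m n : ℕ) :
    (1 / (N : ℝ)) * ∑ k ∈ range N,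
        Real.cos ((n : ℝ) * (((k : ℝ) + 1 / 2) * Real.pi / N)) *
          Real.cos ((m : ℝ) * (((k : ℝ) + 1 / 2) * Real.pi / N))
      = (1 / 2) * aliasDelta N ((m : ℤ) + n) + (1 / 2) * aliasDelta N ((m : ℤ) - n) := by
  have hNR : (N : ℝ) ≠ 0 := Nat.cast_ne_zero.mpr hN.ne'
  have key : ∀ k ∈ range N,
      Real.cos ((n : ℝ) * (((k : ℝ) + 1 / 2) * Real.pi / N)) *
          Real.cos ((m : ℝ) * (((k : ℝ) + 1 / 2) * Real.pi / N))
        = (1/2) * Real.cos ((((m : ℤ) + n : ℤ) : ℝ) * (((k : ℝ) + 1 / 2) * Real.pi / N))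
          + (1/2) * Real.cos ((((m : ℤ) - n : ℤ) : ℝ) * (((k : ℝ) + 1 / 2) * Real.pi / N)) := by
    intro k _
    set θ : ℝ := ((k : ℝ) + 1 / 2) * Real.pi / N
    have e1 : (((m : ℤ) + n : ℤ) : ℝ) * θ = (m : ℝ) * θ + (n : ℝ) * θ := by push_cast; ring
    have e2 : (((m : ℤ) - n : ℤ) : ℝ) * θ = (m : ℝ) * θ - (n : ℝ) * θ := by push_cast; ring
    rw [e1, e2, Real.cos_add, Real.cos_sub]
    ring
  rw [Finset.sum_congr rfl key, Finset.sum_add_distrib, ← Finset.mul_sum, ← Finset.mul_sum,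
    delta1 N hN ((m : ℤ) + n), delta1 N hN ((m : ℤ) - n)]
  field_simp

theorem stmt10 (D : ℕ) (hD : 0 < D) (N : Fin D → ℕ) (hN : ∀ i, 0 < N i)
    (m n : Fin D → ℕ) :
    (∏ i, (1 / (N i : ℝ))) *
      ∑ k ∈ Fintype.piFinset (fun i => Finset.range (N i)),
        ∏ i,
          Real.cos ((n i : ℝ) * (((k i : ℝ) + 1 / 2) * Real.pi / (N i))) *
            Real.cos ((m i : ℝ) * (((k i : ℝ) + 1 / 2) * Real.pi / (N i))) =
    ∏ i,
      ((1 / 2) * aliasDelta (N i) ((m i : ℤ) + (n i : ℤ)) +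
        (1 / 2) * aliasDelta (N i) ((m i : ℤ) - (n i : ℤ))) := by
  have hps := Finset.prod_univ_sum (fun i => Finset.range (N i))
    (fun i k => Real.cos ((n i : ℝ) * (((k : ℝ) + 1 / 2) * Real.pi / (N i))) *
      Real.cos ((m i : ℝ) * (((k : ℝ) + 1 / 2) * Real.pi / (N i))))
  rw [← hps, ← Finset.prod_mul_distrib]
  exact Finset.prod_congr rfl fun i _ => dim1 (N i) (hN i) (m i) (n i)
end

section
/- Let D be a positive integer, let N_1, …, N_D be positive integers, let θ^{(i)}_{k} = (k+1/2)π/N_i, let 𝒩 be a finite set of multi-indices in ℕ^D, let (c_m)_{m∈𝒩} be real coefficients, and define p(θ_1, …, θ_D) = ∑_{m∈𝒩} c_m ∏_{i=1}^{D} cos(m_i θ_i). Then for every multi-index n ∈ ℕ^D, (∏_{i=1}^{D} 1/N_i) · ∑_{k_1=0}^{N_1−1} ⋯ ∑_{k_D=0}^{N_D−1} ( ∏_{i=1}^{D} cos(n_i θ^{(i)}_{k_i}) ) · p(θ^{(1)}_{k_1}, …, θ^{(D)}_{k_D}) = ∑_{m∈𝒩} c_m ∏_{i=1}^{D} ( (1/2)·Δ_{N_i}(m_i+n_i)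 + (1/2)·Δ_{N_i}(m_i−n_i) ). -/
open Real Finset

lemma sum_cos_alias (N : ℕ) (hN : 0 < N) (ℓ : ℤ) :
    ∑ k ∈ Finset.range N, Real.cos ((ℓ : ℝ) * (((k : ℝ) + 1 / 2) * Real.pi / N))
      = (N : ℝ) * aliasDelta N ℓ := by
  have hNR : (N : ℝ) ≠ 0 := Nat.cast_ne_zero.mpr hN.ne'
  by_cases h : (2 * (N : ℤ)) ∣ ℓ
  · obtain ⟨q, hq⟩ := h
    have hterm : ∀ k ∈ Finset.range N,
        Real.cos ((ℓ : ℝ) * (((k : ℝ) + 1 / 2) * Real.pi / N)) = (-1 : ℝ) ^ q := by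
      intro k _
      have hang : (ℓ : ℝ) * (((k : ℝ) + 1 / 2) * Real.pi / N)
          = ((q * (2 * k + 1) : ℤ) : ℝ) * Real.pi := by
        subst hq; push_cast; field_simp
      rw [hang, show ((q * (2 * (k : ℤ) + 1) : ℤ) : ℝ) * Real.pi
          = ((q * (2 * (k : ℤ) + 1) : ℤ) : ℝ) * Real.pi - 0 by ring,
        Real.cos_int_mul_pi_sub, Real.cos_zero, mul_one]
      rw [show q * (2 * (k : ℤ) + 1) = q + 2 * (q * k) by ring,
        zpow_add₀ (by norm_num : (-1 : ℝ) ≠ 0), zpow_mul]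
      norm_num
    rw [Finset.sum_congr rfl hterm, Finset.sum_const, Finset.card_range, nsmul_eq_mul]
    congr 1
    rcases Int.even_or_odd q with he | ho
    · obtain ⟨r, hr⟩ := he
      have hmod : ℓ % (4 * N) = 0 :=
        Int.emod_eq_zero_of_dvd ⟨r, by rw [hq, hr]; ring⟩
      have hq1 : (-1 : ℝ) ^ q = 1 := by
        rw [hr, zpow_add₀ (by norm_num : (-1 : ℝ) ≠ 0), ← mul_zpow]
        norm_num
      simp [aliasDelta, hmod, hq1]
    · obtain ⟨r, hr⟩ := ho
      have hNz : (0 : ℤ) < N := by exact_mod_cast hN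
      have hmod : ℓ % (4 * N) = 2 * N := by
        have : ℓ = 2 * N + (4 * N) * r := by rw [hq, hr]; ring
        rw [this, Int.add_mul_emod_self_left, Int.emod_eq_of_lt (by linarith) (by linarith)]
      have h2N : (2 * (N : ℤ)) ≠ 0 := by positivity
      have hq1 : (-1 : ℝ) ^ q = -1 := by
        rw [hr, zpow_add₀ (by norm_num : (-1 : ℝ) ≠ 0), zpow_one, zpow_mul]
        norm_num
      simp [aliasDelta, hmod, h2N, hq1]
  · -- off-resonance: telescoping sum gives 0
    set β : ℝ := (ℓ : ℝ) * Real.pi / N with hβ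
    have hsinhalf : Real.sin (β / 2) ≠ 0 := by
      intro hs
      rw [Real.sin_eq_zero_iff] at hs
      obtain ⟨t, ht⟩ := hs
      apply h
      refine ⟨t, ?_⟩
      have hπ : Real.pi ≠ 0 := Real.pi_ne_zero
      have ht' : (t : ℝ) * Real.pi * ((N : ℝ) * 2) = (ℓ : ℝ) * Real.pi := by
        have := ht
        rw [hβ] at this
        field_simp at this
        rw [← this]; ring
      have h3 : (ℓ : ℝ) * Real.pi = (2 * (N : ℝ) * (t : ℝ)) * Real.pi := by
        linear_combination -ht'
      have h2 : ((2 * N * t : ℤ) : ℝ) = (ℓ : ℝ) := by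
        push_cast
        exact (mul_right_cancel₀ hπ h3).symm
      exact_mod_cast h2.symm
    have tele : ∑ k ∈ Finset.range N,
        (Real.sin (((k : ℝ) + 1) * β) - Real.sin ((k : ℝ) * β))
        = Real.sin ((N : ℝ) * β) - Real.sin ((0 : ℝ) * β) := by
      have := Finset.sum_range_sub (fun k : ℕ => Real.sin ((k : ℝ) * β)) N
      simpa using this
    have hdiff : ∀ k ∈ Finset.range N,
        Real.sin (((k : ℝ) + 1) * β) - Real.sin ((k : ℝ) * β)
        = 2 * Real.sin (β / 2) * Real.cos ((ℓ : ℝ) * (((k : ℝ) + 1 / 2) * Real.pi / N)) := by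
      intro k _
      have harg : (ℓ : ℝ) * (((k : ℝ) + 1 / 2) * Real.pi / N) = ((k : ℝ) + 1 / 2) * β := by
        rw [hβ]; field_simp
      rw [harg,
        show ((k : ℝ) + 1) * β = ((k : ℝ) + 1 / 2) * β + β / 2 by ring,
        show (k : ℝ) * β = ((k : ℝ) + 1 / 2) * β - β / 2 by ring,
        Real.sin_add, Real.sin_sub]
      ring
    rw [Finset.sum_congr rfl hdiff] at tele
    have hNβ : (N : ℝ) * β = (ℓ : ℝ) * Real.pi := by rw [hβ]; field_simp
    rw [hNβ, Real.sin_int_mul_pi, zero_mul, Real.sin_zero, sub_zero,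
      ← Finset.mul_sum] at tele
    have hsum : ∑ k ∈ Finset.range N,
        Real.cos ((ℓ : ℝ) * (((k : ℝ) + 1 / 2) * Real.pi / N)) = 0 := by
      have h2 : (2 : ℝ) * Real.sin (β / 2) ≠ 0 := by
        simp [hsinhalf]
      exact (mul_eq_zero.mp tele).resolve_left h2
    rw [hsum]
    have hd1 : ℓ % (4 * N) ≠ 0 := by
      intro hc
      exact h (dvd_trans ⟨2, by ring⟩ (Int.dvd_of_emod_eq_zero hc))
    have hd2 : ℓ % (4 * N) ≠ 2 * N := by
      intro hc
      apply h
      have hdm : ℓ = 4 * N * (ℓ / (4 * N)) + 2 * N := by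
        rw [← hc]; exact (Int.mul_ediv_add_emod ℓ (4 * N)).symm
      exact ⟨2 * (ℓ / (4 * N)) + 1, by linear_combination hdm⟩
    simp [aliasDelta, hd1, hd2]

lemma orth (N : ℕ) (hN : 0 < N) (m n : ℕ) :
    ∑ k ∈ Finset.range N,
      Real.cos ((n : ℝ) * (((k : ℝ) + 1 / 2) * Real.pi / N)) *
        Real.cos ((m : ℝ) * (((k : ℝ) + 1 / 2) * Real.pi / N))
    = (N : ℝ) * ((1 / 2) * aliasDelta N ((m : ℤ) + (n : ℤ)) +
        (1 / 2) * aliasDelta N ((m : ℤ) - (n : ℤ))) := by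
  have key : ∀ k ∈ Finset.range N,
      Real.cos ((n : ℝ) * (((k : ℝ) + 1 / 2) * Real.pi / N)) *
        Real.cos ((m : ℝ) * (((k : ℝ) + 1 / 2) * Real.pi / N))
      = 1 / 2 * Real.cos ((((m : ℤ) + (n : ℤ) : ℤ) : ℝ) * (((k : ℝ) + 1 / 2) * Real.pi / N))
        + 1 / 2 * Real.cos ((((m : ℤ) - (n : ℤ) : ℤ) : ℝ) * (((k : ℝ) + 1 / 2) * Real.pi / N)) := by
    intro k _
    set θ : ℝ := ((k : ℝ) + 1 / 2) * Real.pi / N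
    push_cast
    rw [show ((m : ℝ) + n) * θ = (m : ℝ) * θ + (n : ℝ) * θ by ring,
      show ((m : ℝ) - n) * θ = (m : ℝ) * θ - (n : ℝ) * θ by ring,
      Real.cos_add, Real.cos_sub]
    ring
  rw [Finset.sum_congr rfl key, Finset.sum_add_distrib, ← Finset.mul_sum, ← Finset.mul_sum,
    sum_cos_alias N hN, sum_cos_alias N hN]
  ring

theorem stmt11 (D : ℕ) (hD : 0 < D) (N : Fin D → ℕ) (hN : ∀ i, 0 < N i)
    (𝒩 : Finset (Fin D → ℕ)) (c : (Fin D → ℕ) → ℝ)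
    (p : (Fin D → ℝ) → ℝ)
    (hp : ∀ θ : Fin D → ℝ,
      p θ = ∑ m ∈ 𝒩, c m * ∏ i, Real.cos ((m i : ℝ) * θ i))
    (n : Fin D → ℕ) :
    (∏ i, (1 / (N i : ℝ))) *
      ∑ k ∈ Fintype.piFinset (fun i => Finset.range (N i)),
        (∏ i, Real.cos ((n i : ℝ) * (((k i : ℝ) + 1 / 2) * Real.pi / (N i)))) *
          p (fun i => ((k i : ℝ) + 1 / 2) * Real.pi / (N i)) =
    ∑ m ∈ 𝒩,
      c m *
        ∏ i,
          ((1 / 2) * aliasDelta (N i) ((m i : ℤ) + (n i : ℤ)) +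
            (1 / 2) * aliasDelta (N i) ((m i : ℤ) - (n i : ℤ))) := by
  simp only [hp]
  have step1 : ∀ k ∈ Fintype.piFinset (fun i => Finset.range (N i)),
      (∏ i, Real.cos ((n i : ℝ) * (((k i : ℝ) + 1 / 2) * Real.pi / (N i)))) *
        ∑ m ∈ 𝒩, c m * ∏ i, Real.cos ((m i : ℝ) * (((k i : ℝ) + 1 / 2) * Real.pi / (N i)))
      = ∑ m ∈ 𝒩, c m * ∏ i,
          (Real.cos ((n i : ℝ) * (((k i : ℝ) + 1 / 2) * Real.pi / (N i))) *
            Real.cos ((m i : ℝ) * (((k i : ℝ) + 1 / 2) * Real.pi / (N i)))) := by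
    intro k _
    rw [Finset.mul_sum]
    refine Finset.sum_congr rfl fun m _ => ?_
    rw [Finset.prod_mul_distrib]
    ring
  rw [Finset.sum_congr rfl step1, Finset.sum_comm, Finset.mul_sum]
  refine Finset.sum_congr rfl fun m _ => ?_
  rw [← Finset.mul_sum]
  have hps := Finset.prod_univ_sum (fun i => Finset.range (N i))
    (fun (i : Fin D) (k : ℕ) =>
      Real.cos ((n i : ℝ) * (((k : ℝ) + 1 / 2) * Real.pi / (N i))) *
        Real.cos ((m i : ℝ) * (((k : ℝ) + 1 / 2) * Real.pi / (N i))))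
  rw [← hps]
  rw [Finset.prod_congr rfl (fun i (_ : i ∈ Finset.univ) => orth (N i) (hN i) (m i) (n i)),
    Finset.prod_mul_distrib]
  have h1 : (∏ i, (1 / (N i : ℝ))) * ∏ i, (N i : ℝ) = 1 := by
    rw [← Finset.prod_mul_distrib]
    apply Finset.prod_eq_one
    intro i _
    have : ((N i : ℝ)) ≠ 0 := Nat.cast_ne_zero.mpr (hN i).ne'
    field_simp
  calc (∏ i, (1 / (N i : ℝ))) *
      (c m * ((∏ i, (N i : ℝ)) * ∏ i,
        ((1 / 2) * aliasDelta (N i) ((m i : ℤ) + (n i : ℤ)) +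
          (1 / 2) * aliasDelta (N i) ((m i : ℤ) - (n i : ℤ)))))
      = ((∏ i, (1 / (N i : ℝ))) * ∏ i, (N i : ℝ)) *
        (c m * ∏ i,
          ((1 / 2) * aliasDelta (N i) ((m i : ℤ) + (n i : ℤ)) +
            (1 / 2) * aliasDelta (N i) ((m i : ℤ) - (n i : ℤ)))) := by ring
    _ = c m * ∏ i,
          ((1 / 2) * aliasDelta (N i) ((m i : ℤ) + (n i : ℤ)) +
            (1 / 2) * aliasDelta (N i) ((m i : ℤ) - (n i : ℤ))) := by rw [h1, one_mul]
end
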